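/- If $G$ is a (simple, undirected) graph with maximum degree at most $\Delta$ and $v$ is a vertex of $G$, then for each $m \in \mathbb{N}$ the number of subtrees of $G$ with exactly $m$ vertices that contain $v$ is at most $(e\Delta)^{m-1}$. -/

import Mathlib

open Finset

namespace SubtreeCount

variable {V : Type*} [Fintype V] [DecidableEq V] [LinearOrder V]
  (G : SimpleGraph V) [DecidableRel G.Adj]

/-- Candidate vertices: in `S`, not yet chosen, adjacent to a chosen vertex. -/
def cand (S P : Finset V) : Finset V := (S \ P).filter (fun w => ∃ p ∈ P, G.Adj p w)

/-- Next vertex chosen by the greedy exploration. -/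
def nxt (v : V) (S P : Finset V) : V :=
  if h : (cand G S P).Nonempty then (cand G S P).min' h else v

/-- Chosen vertices after `i` steps. -/
def chos (v : V) (S : Finset V) : ℕ → Finset V
  | 0 => {v}
  | i + 1 => insert (nxt G v S (chos v S i)) (chos v S i)

/-- The exploration sequence. -/
def seqv (v : V) (S : Finset V) : ℕ → V
  | 0 => v
  | i + 1 => nxt G v S (chos G v S i)

@[simp] lemma chos_zero (v : V) (S : Finset V) : chos G v S 0 = {v} := rfl
@[simp] lemma chos_succ (v : V) (S : Finset V) (i : ℕ) :
    chos G v S (i+1) = insert (nxt G v S (chos G v S i)) (chos G v S i) := rfl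
@[simp] lemma seqv_zero (v : V) (S : Finset V) : seqv G v S 0 = v := rfl
@[simp] lemma seqv_succ (v : V) (S : Finset V) (i : ℕ) :
    seqv G v S (i+1) = nxt G v S (chos G v S i) := rfl

lemma chos_eq_image (v : V) (S : Finset V) (i : ℕ) :
    chos G v S i = (range (i+1)).image (seqv G v S) := by
  induction i with
  | zero => simp
  | succ i ih => rw [range_add_one, image_insert, ← ih, chos_succ, seqv_succ]

lemma mem_chos_self (v : V) (S : Finset V) (i : ℕ) : v ∈ chos G v S i := by
  rw [chos_eq_image]
  exact mem_image.mpr ⟨0, by simp, rfl⟩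

lemma crossing_aux {S P : Finset V} :
    ∀ {a b : (S : Set V)}, (G.induce (S : Set V)).Walk a b → (a : V) ∈ P → (b : V) ∉ P →
      (cand G S P).Nonempty := by
  intro a b w
  induction w with
  | nil => intro h h'; exact absurd h h'
  | @cons a c b h q ih =>
    intro ha hb
    by_cases hc : (c : V) ∈ P
    · exact ih hc hb
    · refine ⟨(c : V), ?_⟩
      rw [cand, mem_filter, mem_sdiff]
      exact ⟨⟨c.2, hc⟩, (a : V), ha, h⟩

lemma crossing {S : Finset V} (hconn : (G.induce (S : Set V)).Connected)
    {P : Finset V} (hPS : P ⊆ S) (hP : P.Nonempty) {w : V} (hwS : w ∈ S) (hwP : w ∉ P) :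
    (cand G S P).Nonempty := by
  obtain ⟨p, hp⟩ := hP
  obtain ⟨wk⟩ := hconn.preconnected ⟨p, hPS hp⟩ ⟨w, hwS⟩
  exact crossing_aux G wk hp hwP

variable {G}

section Props

variable {v : V} {S : Finset V} (hv : v ∈ S) (hconn : (G.induce (S : Set V)).Connected)

include hv hconn

lemma chos_spec : ∀ i, i < S.card → chos G v S i ⊆ S ∧ (chos G v S i).card = i + 1 := by
  intro i
  induction i with
  | zero => intro _; simpa using hv
  | succ i ih =>
    intro hi
    obtain ⟨hsub, hcard⟩ := ih (by omega)
    have hex : ∃ w ∈ S, w ∉ chos G v S i := by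
      by_contra h
      push_neg at h
      have : S ⊆ chos G v S i := fun w hw => h w hw
      have := card_le_card this
      omega
    obtain ⟨w, hwS, hwP⟩ := hex
    have hne : (cand G S (chos G v S i)).Nonempty :=
      crossing G hconn hsub ⟨v, mem_chos_self G v S i⟩ hwS hwP
    have hmem : nxt G v S (chos G v S i) ∈ cand G S (chos G v S i) := by
      rw [nxt, dif_pos hne]; exact min'_mem _ _
    rw [cand, mem_filter, mem_sdiff] at hmem
    constructor
    · rw [chos_succ]
      exact insert_subset hmem.1.1 hsub
    · rw [chos_succ, card_insert_of_notMem hmem.1.2, hcard]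

lemma cand_nonempty {i : ℕ} (hi : i + 1 < S.card) :
    (cand G S (chos G v S i)).Nonempty := by
  obtain ⟨hsub, hcard⟩ := chos_spec hv hconn i (by omega)
  have hex : ∃ w ∈ S, w ∉ chos G v S i := by
    by_contra h
    push_neg at h
    have := card_le_card (fun w hw => h w hw)
    omega
  obtain ⟨w, hwS, hwP⟩ := hex
  exact crossing G hconn hsub ⟨v, mem_chos_self G v S i⟩ hwS hwP

lemma seqv_succ_mem {i : ℕ} (hi : i + 1 < S.card) :
    seqv G v S (i+1) ∈ cand G S (chos G v S i) := by
  rw [seqv_succ, nxt, dif_pos (cand_nonempty hv hconn hi)]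
  exact min'_mem _ _

lemma chos_eq_self : chos G v S (S.card - 1) = S := by
  have h1 : 1 ≤ S.card := card_pos.mpr ⟨v, hv⟩
  have hi : S.card - 1 < S.card := by omega
  obtain ⟨hsub, hcard⟩ := chos_spec hv hconn _ hi
  apply eq_of_subset_of_card_le hsub
  omega

end Props

variable (G)

/-- Indices (below `S.card`) of vertices in the sequence adjacent to `w`. -/
def fset (v : V) (S : Finset V) (w : V) : Finset ℕ :=
  (range S.card).filter (fun j => G.Adj (seqv G v S j) w)

def fIdx (v : V) (S : Finset V) (w : V) : ℕ :=
  if h : (fset G v S w).Nonempty then (fset G v S w).min' h else 0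

variable {G}

lemma fset_nonempty {v : V} {S : Finset V} (hv : v ∈ S)
    (hconn : (G.induce (S : Set V)).Connected) {w : V} (hw : w ∈ S.erase v) :
    (fset G v S w).Nonempty := by
  rw [mem_erase] at hw
  have hS : w ∈ chos G v S (S.card - 1) := by rw [chos_eq_self hv hconn]; exact hw.2
  rw [chos_eq_image, mem_image] at hS
  obtain ⟨t, ht, hts⟩ := hS
  rw [mem_range] at ht
  have h1 : 1 ≤ S.card := card_pos.mpr ⟨v, hv⟩
  have htm : t < S.card := by omega
  rcases t with _ | i
  · exact absurd hts.symm hw.1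
  · have hmem := seqv_succ_mem hv hconn (i := i) htm
    rw [cand, mem_filter] at hmem
    obtain ⟨p, hp, hadj⟩ := hmem.2
    rw [chos_eq_image, mem_image] at hp
    obtain ⟨j, hj, hjp⟩ := hp
    rw [mem_range] at hj
    refine ⟨j, ?_⟩
    rw [fset, mem_filter, mem_range]
    rw [hts] at *
    exact ⟨by omega, hjp ▸ hadj⟩

lemma fIdx_mem {v : V} {S : Finset V} {w : V} (h : (fset G v S w).Nonempty) :
    fIdx G v S w ∈ fset G v S w := by
  rw [fIdx, dif_pos h]; exact min'_mem _ _

lemma fIdx_min {v : V} {S : Finset V} {w : V} {j : ℕ} (hj : j ∈ fset G v S w) :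
    fIdx G v S w ≤ j := by
  rw [fIdx, dif_pos ⟨j, hj⟩]; exact min'_le _ _ hj

variable (G)

/-- Index of `w` among the neighbours of `x`. -/
def nu (x w : V) : ℕ := ((G.neighborFinset x).filter (· < w)).card

variable {G}

lemma nu_lt {x w : V} (h : w ∈ G.neighborFinset x) : nu G x w < G.degree x := by
  have hsub : (G.neighborFinset x).filter (· < w) ⊆ (G.neighborFinset x).erase w := by
    intro y hy
    rw [mem_filter] at hy
    exact mem_erase.mpr ⟨ne_of_lt hy.2, hy.1⟩
  have hle := card_le_card hsub
  rw [card_erase_of_mem h] at hle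
  have hpos : 0 < (G.neighborFinset x).card := card_pos.mpr ⟨w, h⟩
  have hdeg := G.card_neighborFinset_eq_degree x
  rw [nu]
  omega

lemma nu_inj {x w w' : V} (hw : w ∈ G.neighborFinset x) (hw' : w' ∈ G.neighborFinset x)
    (h : nu G x w = nu G x w') : w = w' := by
  rcases lt_trichotomy w w' with hlt | heq | hlt
  · exfalso
    have hsub : (G.neighborFinset x).filter (· < w) ⊂ (G.neighborFinset x).filter (· < w') := by
      refine ⟨fun y hy => ?_, fun hc => ?_⟩
      · rw [mem_filter] at hy ⊢
        exact ⟨hy.1, lt_trans hy.2 hlt⟩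
      have : w ∈ (G.neighborFinset x).filter (· < w) := hc (mem_filter.mpr ⟨hw, hlt⟩)
      exact absurd (mem_filter.mp this).2 (lt_irrefl w)
    have := card_lt_card hsub
    rw [nu, nu] at h; omega
  · exact heq
  · exfalso
    have hsub : (G.neighborFinset x).filter (· < w') ⊂ (G.neighborFinset x).filter (· < w) := by
      refine ⟨fun y hy => ?_, fun hc => ?_⟩
      · rw [mem_filter] at hy ⊢
        exact ⟨hy.1, lt_trans hy.2 hlt⟩
      have : w' ∈ (G.neighborFinset x).filter (· < w') := hc (mem_filter.mpr ⟨hw', hlt⟩)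
      exact absurd (mem_filter.mp this).2 (lt_irrefl w')
    have := card_lt_card hsub
    rw [nu, nu] at h; omega

variable (G)

/-- The code of a connected set: for every non-root vertex record the first time
an adjacent vertex was explored, and its index among that vertex's neighbours. -/
def encode (v : V) (S : Finset V) : Finset (ℕ × ℕ) :=
  (S.erase v).image fun w => (fIdx G v S w, nu G (seqv G v S (fIdx G v S w)) w)

variable {G}

section Code

variable {v : V} {S : Finset V} (hv : v ∈ S) (hconn : (G.induce (S : Set V)).Connected)

include hv hconn

lemma encode_card : (encode G v S).card = S.card - 1 := by
  rw [encode, card_image_of_injOn, card_erase_of_mem hv]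
  intro w hw w' hw' h
  rw [Prod.mk.injEq] at h
  have h1 := fIdx_mem (fset_nonempty hv hconn hw)
  have h2 := fIdx_mem (fset_nonempty hv hconn hw')
  rw [fset, mem_filter] at h1 h2
  rw [← h.1] at h2
  exact nu_inj ((G.mem_neighborFinset _ _).mpr h1.2) ((G.mem_neighborFinset _ _).mpr h2.2)
    (h.2.trans (by rw [h.1]) : _)

lemma encode_subset {Δ : ℕ} (hΔ : ∀ x : V, G.degree x ≤ Δ) :
    encode G v S ⊆ range S.card ×ˢ range Δ := by
  intro p hp
  rw [encode, mem_image] at hp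
  obtain ⟨w, hw, rfl⟩ := hp
  have h1 := fIdx_mem (fset_nonempty hv hconn hw)
  rw [fset, mem_filter, mem_range] at h1
  rw [mem_product, mem_range, mem_range]
  refine ⟨h1.1, lt_of_lt_of_le (nu_lt ((G.mem_neighborFinset _ _).mpr h1.2)) (hΔ _)⟩

lemma mem_cand_iff {i : ℕ} (hi : i < S.card) (w : V) :
    w ∈ cand G S (chos G v S i) ↔ w ∉ chos G v S i ∧ ∃ j k, (j, k) ∈ encode G v S ∧ j ≤ i ∧
      w ∈ G.neighborFinset (seqv G v S j) ∧ nu G (seqv G v S j) w = k := by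
  constructor
  · intro hw
    rw [cand, mem_filter, mem_sdiff] at hw
    obtain ⟨⟨hwS, hwP⟩, p, hp, hadj⟩ := hw
    have hwv : w ≠ v := fun h => hwP (h ▸ mem_chos_self G v S i)
    have hwe : w ∈ S.erase v := mem_erase.mpr ⟨hwv, hwS⟩
    -- p = seqv j for some j ≤ i
    rw [chos_eq_image, mem_image] at hp
    obtain ⟨j, hj, rfl⟩ := hp
    rw [mem_range] at hj
    have hjf : j ∈ fset G v S w := by
      rw [fset, mem_filter, mem_range]
      exact ⟨by omega, hadj⟩
    have hle : fIdx G v S w ≤ j := fIdx_min hjf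
    have hmem := fIdx_mem (fset_nonempty hv hconn hwe)
    rw [fset, mem_filter] at hmem
    refine ⟨hwP, fIdx G v S w, nu G (seqv G v S (fIdx G v S w)) w, ?_, by omega,
      (G.mem_neighborFinset _ _).mpr hmem.2, rfl⟩
    rw [encode, mem_image]
    exact ⟨w, hwe, rfl⟩
  · rintro ⟨hwP, j, k, hjk, hji, hwn, hnu⟩
    rw [encode, mem_image] at hjk
    obtain ⟨w', hw', heq⟩ := hjk
    rw [Prod.mk.injEq] at heq
    have hmem' := fIdx_mem (fset_nonempty hv hconn hw')
    rw [fset, mem_filter] at hmem'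
    have hw'n : w' ∈ G.neighborFinset (seqv G v S j) := by
      rw [← heq.1]
      exact (G.mem_neighborFinset _ _).mpr hmem'.2
    have hww' : w = w' := by
      apply nu_inj hwn hw'n
      rw [hnu, ← heq.2, heq.1]
    rw [cand, mem_filter, mem_sdiff]
    refine ⟨⟨?_, hwP⟩, seqv G v S j, ?_, ?_⟩
    · rw [hww']; exact (mem_erase.mp hw').2
    · rw [chos_eq_image, mem_image]
      exact ⟨j, mem_range.mpr (by omega), rfl⟩
    · exact (G.mem_neighborFinset _ _).mp hwn

end Code

lemma encode_injective {v : V} {S S' : Finset V} {m : ℕ}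
    (hv : v ∈ S) (hconn : (G.induce (S : Set V)).Connected) (hcard : S.card = m)
    (hv' : v ∈ S') (hconn' : (G.induce (S' : Set V)).Connected) (hcard' : S'.card = m)
    (hcode : encode G v S = encode G v S') : S = S' := by
  have hm : 1 ≤ m := hcard ▸ card_pos.mpr ⟨v, hv⟩
  have key : ∀ i, i < m → ∀ j, j ≤ i → seqv G v S j = seqv G v S' j := by
    intro i
    induction i with
    | zero => intro _ j hj; interval_cases j; simp
    | succ i ih =>
      intro hi j hj
      rcases Nat.lt_succ_iff_lt_or_eq.mp (Nat.lt_succ_of_le hj) with h | rfl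
      · exact ih (by omega) j (by omega)
      · -- j = i + 1
        have hchos : chos G v S i = chos G v S' i := by
          rw [chos_eq_image, chos_eq_image]
          apply image_congr
          intro x hx
          rw [coe_range, Set.mem_Iio] at hx
          exact ih (by omega) x (by omega)
        have hcand : cand G S (chos G v S i) = cand G S' (chos G v S i) := by
          ext w
          rw [mem_cand_iff hv hconn (by omega : i < S.card)]
          conv_rhs => rw [hchos]
          rw [mem_cand_iff hv' hconn' (by omega : i < S'.card)]
          rw [← hchos, hcode]
          constructor
          · rintro ⟨h1, jj, k, h2, h3, h4, h5⟩
            exact ⟨h1, jj, k, h2, h3, by rwa [← ih (by omega) jj (by omega)],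
              by rwa [← ih (by omega) jj (by omega)]⟩
          · rintro ⟨h1, jj, k, h2, h3, h4, h5⟩
            exact ⟨h1, jj, k, h2, h3, by rwa [ih (by omega) jj (by omega)],
              by rwa [ih (by omega) jj (by omega)]⟩
        rw [seqv_succ, seqv_succ, nxt, nxt, hcand, hchos]
  have himg : S = S' := by
    have e1 : chos G v S (S.card - 1) = S := chos_eq_self hv hconn
    have e2 : chos G v S' (S'.card - 1) = S' := chos_eq_self hv' hconn'
    rw [← e1, ← e2, hcard, hcard', chos_eq_image, chos_eq_image]
    apply image_congr
    intro x hx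
    rw [coe_range, Set.mem_Iio] at hx
    exact key (m-1) (by omega) x (by omega)
  exact himg

end SubtreeCount

open SubtreeCount Finset

section Analysis

/-- `(k+1)^k ≤ e^k * k!`. -/
lemma pow_le_exp_mul_factorial : ∀ k : ℕ, ((k:ℝ) + 1) ^ k ≤ Real.exp 1 ^ k * (Nat.factorial k) := by
  intro k
  induction k with
  | zero => simp
  | succ k ih =>
    have h1 : ((k:ℝ) + 1 + 1) ≤ ((k:ℝ) + 1) * Real.exp (1 / ((k:ℝ)+1)) := by
      have hk : (0:ℝ) < (k:ℝ) + 1 := by positivity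
      have := Real.add_one_le_exp (1 / ((k:ℝ)+1))
      calc ((k:ℝ) + 1 + 1) = ((k:ℝ)+1) * (1/((k:ℝ)+1) + 1) := by field_simp; ring
        _ ≤ ((k:ℝ)+1) * Real.exp (1/((k:ℝ)+1)) := by
            apply mul_le_mul_of_nonneg_left this (le_of_lt hk)
    have h2 : ((k:ℝ) + 1 + 1) ^ (k+1) ≤ (((k:ℝ)+1) * Real.exp (1/((k:ℝ)+1))) ^ (k+1) := by
      apply pow_le_pow_left₀ (by positivity) h1
    have h3 : (Real.exp (1/((k:ℝ)+1))) ^ (k+1) = Real.exp 1 := by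
      rw [← Real.exp_nat_mul]
      congr 1
      field_simp
      push_cast; ring
    calc (((k+1 : ℕ) : ℝ) + 1) ^ (k+1) = ((k:ℝ) + 1 + 1) ^ (k+1) := by push_cast; ring
      _ ≤ (((k:ℝ)+1) * Real.exp (1/((k:ℝ)+1))) ^ (k+1) := h2
      _ = ((k:ℝ)+1) ^ (k+1) * Real.exp 1 := by rw [mul_pow, h3]
      _ = ((k:ℝ)+1) * (((k:ℝ)+1) ^ k) * Real.exp 1 := by ring
      _ ≤ ((k:ℝ)+1) * (Real.exp 1 ^ k * (Nat.factorial k)) * Real.exp 1 := by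
          apply mul_le_mul_of_nonneg_right _ (le_of_lt (Real.exp_pos 1))
          apply mul_le_mul_of_nonneg_left ih (by positivity)
      _ = Real.exp 1 ^ (k+1) * (((k:ℝ)+1) * (Nat.factorial k)) := by ring
      _ = Real.exp 1 ^ (k+1) * (Nat.factorial (k+1)) := by
          rw [Nat.factorial_succ]; push_cast; ring

lemma choose_le_exp_pow (Δ k : ℕ) :
    (((k+1) * Δ).choose k : ℝ) ≤ (Real.exp 1 * Δ) ^ k := by
  have hfact : (0:ℝ) < (Nat.factorial k : ℝ) := by
    exact_mod_cast Nat.factorial_pos k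
  rw [← mul_le_mul_iff_of_pos_right hfact]
  have h1 : (((k+1) * Δ).choose k : ℝ) * (Nat.factorial k) ≤ (((k+1) * Δ : ℕ) : ℝ) ^ k := by
    have := Nat.descFactorial_le_pow ((k+1) * Δ) k
    have heq := Nat.descFactorial_eq_factorial_mul_choose ((k+1) * Δ) k
    have : ((k+1)*Δ).choose k * Nat.factorial k ≤ ((k+1)*Δ) ^ k := by
      rw [mul_comm, ← heq]; exact this
    exact_mod_cast this
  calc (((k+1) * Δ).choose k : ℝ) * (Nat.factorial k) ≤ (((k+1) * Δ : ℕ) : ℝ) ^ k := h1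
    _ = ((k:ℝ)+1) ^ k * (Δ:ℝ) ^ k := by push_cast; rw [mul_pow]
    _ ≤ (Real.exp 1 ^ k * (Nat.factorial k)) * (Δ:ℝ) ^ k := by
        apply mul_le_mul_of_nonneg_right (pow_le_exp_mul_factorial k) (by positivity)
    _ = (Real.exp 1 * Δ) ^ k * (Nat.factorial k) := by rw [mul_pow]; ring

end Analysis

/-- If `G` is a graph with maximum degree at most `Δ`, then for each `m` the
number of sets of `m` vertices containing a given vertex `v` whose induced
subgraph is connected (i.e. subtrees of order `m` through `v`) is at most
`(eΔ)^(m-1)`. -/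
theorem stmt1 {V : Type*} [Fintype V] [DecidableEq V] (G : SimpleGraph V)
    [DecidableRel G.Adj] (Δ : ℕ) (hΔ : ∀ v : V, G.degree v ≤ Δ) (v : V) (m : ℕ) :
    ({S : Finset V | S.card = m ∧ v ∈ S ∧ (G.induce (S : Set V)).Connected}.ncard : ℝ) ≤
      (Real.exp 1 * Δ) ^ (m - 1) := by
  letI : LinearOrder V := LinearOrder.lift' (Fintype.equivFin V) (Fintype.equivFin V).injective
  set 𝒮 := {S : Finset V | S.card = m ∧ v ∈ S ∧ (G.induce (S : Set V)).Connected} with h𝒮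
  rcases Nat.eq_zero_or_pos m with rfl | hm
  · have : 𝒮 = ∅ := by
      ext S
      simp only [h𝒮, Set.mem_setOf_eq, Set.mem_empty_iff_false, iff_false]
      rintro ⟨h1, h2, -⟩
      have := card_pos.mpr ⟨v, h2⟩
      omega
    rw [this]
    simp only [Set.ncard_empty, Nat.cast_zero]
    positivity
  · obtain ⟨k, rfl⟩ : ∃ k, m = k + 1 := ⟨m - 1, by omega⟩
    have hinj : Set.InjOn (encode G v) 𝒮 := by
      rintro S ⟨hc, hv, hconn⟩ S' ⟨hc', hv', hconn'⟩ h
      exact encode_injective hv hconn hc hv' hconn' hc' h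
    have himg : encode G v '' 𝒮 ⊆ ↑((range (k+1) ×ˢ range Δ).powersetCard k) := by
      rintro T ⟨S, ⟨hc, hv, hconn⟩, rfl⟩
      refine mem_coe.mpr (mem_powersetCard.mpr ⟨?_, ?_⟩)
      · have := encode_subset hv hconn hΔ
        rwa [hc] at this
      · rw [encode_card hv hconn, hc]
        omega
    have h1 : 𝒮.ncard = (encode G v '' 𝒮).ncard := (Set.ncard_image_of_injOn hinj).symm
    have h2 : (encode G v '' 𝒮).ncard ≤ ((range (k+1) ×ˢ range Δ).powersetCard k).card := by
      rw [← Set.ncard_coe_finset]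
      exact Set.ncard_le_ncard himg (Set.toFinite _)
    have h3 : ((range (k+1) ×ˢ range Δ).powersetCard k).card = ((k+1) * Δ).choose k := by
      rw [card_powersetCard, card_product, card_range, card_range]
    have hle : (𝒮.ncard : ℝ) ≤ (((k+1) * Δ).choose k : ℝ) := by
      rw [h1]
      exact_mod_cast h3 ▸ h2
    calc (𝒮.ncard : ℝ) ≤ (((k+1) * Δ).choose k : ℝ) := hle
      _ ≤ (Real.exp 1 * Δ) ^ k := choose_le_exp_pow Δ k
      _ = (Real.exp 1 * Δ) ^ (k + 1 - 1) := by norm_num
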